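/- arXiv:1507.01818 — 2 statements merged into one kernel-verified Lean document; each statement's English description precedes it below -/
import Mathlib

section
/- Let G and H be graphs, each given an acyclic edge colouring with disjoint colour sets, and colour G □ H by giving every copy of G the colouring of G and every crossing edge the colour of the corresponding edge of H. Then the resulting edge colouring of G □ H is proper, and every bichromatic cycle of this colouring must use both a colour of G and a colour of H (i.e., it alternates between local edges and crossing-edge colours). -/
open SimpleGraph

/-- A proper edge colouring: edges sharing a vertex get distinct colours. -/
def IsProperEdgeColoring {V : Type*} (G : SimpleGraph V) {S : Type*} (c : Sym2 V → S) : Prop :=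
  ∀ e₁ ∈ G.edgeSet, ∀ e₂ ∈ G.edgeSet, e₁ ≠ e₂ → (∃ x, x ∈ e₁ ∧ x ∈ e₂) → c e₁ ≠ c e₂

/-- An acyclic edge colouring: proper, and every cycle uses at least three colours. -/
def IsAcyclicEdgeColoring {V : Type*} (G : SimpleGraph V) {S : Type*} (c : Sym2 V → S) : Prop :=
  IsProperEdgeColoring G c ∧
  ∀ (v : V) (w : G.Walk v v), w.IsCycle →
    ∃ e₁ ∈ w.edges, ∃ e₂ ∈ w.edges, ∃ e₃ ∈ w.edges,
      c e₁ ≠ c e₂ ∧ c e₁ ≠ c e₃ ∧ c e₂ ≠ c e₃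

/-- The acyclic chromatic index: least number of colours in an acyclic edge colouring. -/
noncomputable def acyclicChromaticIndex {V : Type*} (G : SimpleGraph V) : ℕ :=
  sInf {n | ∃ c : Sym2 V → Fin n, IsAcyclicEdgeColoring G c}

/-- A maximal bichromatic path with colour pair {a, b}: a path whose edges use exactly
the colours a and b, not extendable at either end within these colours. -/
def IsMaxBichromaticPath {V S : Type*} (G : SimpleGraph V) (c : Sym2 V → S)
    (a b : S) {u v : V} (w : G.Walk u v) : Prop :=
  w.IsPath ∧ a ≠ b ∧ (∀ e ∈ w.edges, c e = a ∨ c e = b) ∧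
  a ∈ w.edges.map c ∧ b ∈ w.edges.map c ∧
  (∀ x, ∀ h : G.Adj x u, ¬((Walk.cons h w).IsPath ∧ (c s(x, u) = a ∨ c s(x, u) = b))) ∧
  (∀ y, ∀ h : G.Adj v y, ¬((w.concat h).IsPath ∧ (c s(v, y) = a ∨ c s(v, y) = b)))

/-- The auxiliary graph: G plus an edge between the endpoints of every maximal
bichromatic path of the colouring c. -/
def auxGraph {V S : Type*} (G : SimpleGraph V) (c : Sym2 V → S) : SimpleGraph V where
  Adj u v := u ≠ v ∧ (G.Adj u v ∨
    ∃ a b, (∃ w : G.Walk u v, IsMaxBichromaticPath G c a b w) ∨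
           (∃ w : G.Walk v u, IsMaxBichromaticPath G c a b w))
  symm := by
    constructor
    rintro u v ⟨hne, h | ⟨a, b, h⟩⟩
    · exact ⟨hne.symm, Or.inl h.symm⟩
    · exact ⟨hne.symm, Or.inr ⟨a, b, h.symm⟩⟩
  loopless := ⟨fun v h => h.1 rfl⟩

/-- The number of maximal bichromatic paths having `v` as an endpoint. -/
noncomputable def maxBichromPathsAt {V S : Type*} (G : SimpleGraph V) (c : Sym2 V → S)
    (v : V) : ℕ :=
  {p : (u : V) × G.Walk v u | ∃ a b, IsMaxBichromaticPath G c a b p.2}.ncard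

/-- The combined edge colouring of G □ H: local edges get the colour of the corresponding
edge of G, crossing edges the colour of the corresponding edge of H (disjoint colour sets). -/
def boxColoring {α β S T : Type*} [DecidableEq β]
    (cG : Sym2 α → S) (cH : Sym2 β → T) : Sym2 (α × β) → S ⊕ T :=
  Sym2.lift ⟨fun p q =>
    if p.2 = q.2 then Sum.inl (cG s(p.1, q.1)) else Sum.inr (cH s(p.2, q.2)),
    by
      intro p q
      by_cases h : p.2 = q.2
      · simp [h, Sym2.eq_swap]
      · simp [h, Ne.symm h, Sym2.eq_swap]⟩

section Aux

variable {α β S T : Type*} [DecidableEq β] {G : SimpleGraph α} {H : SimpleGraph β}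
  {cG : Sym2 α → S} {cH : Sym2 β → T}

lemma boxColoring_mk (p q : α × β) :
    boxColoring cG cH s(p, q) =
      if p.2 = q.2 then Sum.inl (cG s(p.1, q.1)) else Sum.inr (cH s(p.2, q.2)) := rfl

lemma boxColoring_map_left (b : β) (e : Sym2 α) :
    boxColoring cG cH (Sym2.map (fun u => (u, b)) e) = Sum.inl (cG e) := by
  induction e using Sym2.ind with
  | _ x y => rw [Sym2.map_pair_eq, boxColoring_mk]; simp

lemma boxColoring_map_right (a : α) {e : Sym2 β} (he : e ∈ H.edgeSet) :
    boxColoring cG cH (Sym2.map (fun h => (a, h)) e) = Sum.inr (cH e) := by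
  induction e using Sym2.ind with
  | _ x y =>
    have hxy : x ≠ y := H.ne_of_adj (by simpa using he)
    rw [Sym2.map_pair_eq, boxColoring_mk]
    simp [hxy]

/-- A walk in the box product all of whose edges are crossing lifts to a walk in `H`. -/
lemma lift_cross : ∀ {p q : α × β} (w : (G □ H).Walk p q),
    (∀ e ∈ w.edges, ∃ t, boxColoring cG cH e = Sum.inr t) →
    p.1 = q.1 ∧ ∃ w' : H.Walk p.2 q.2,
      w.support = w'.support.map (fun h => (p.1, h)) ∧
      w.edges = w'.edges.map (Sym2.map (fun h => (p.1, h))) := by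
  intro p q w
  induction w with
  | nil => exact fun _ => ⟨rfl, Walk.nil, by simp, by simp⟩
  | @cons p r q h rest ih =>
    intro hc
    obtain ⟨t, ht⟩ := hc s(p, r) (by simp)
    rw [boxColoring_mk] at ht
    have hsnd : p.2 ≠ r.2 := by
      intro hsnd; rw [if_pos hsnd] at ht; exact Sum.inl_ne_inr ht
    rw [if_neg hsnd] at ht
    have hadj : H.Adj p.2 r.2 ∧ p.1 = r.1 := by
      rcases (boxProd_adj.mp h) with ⟨_, h2⟩ | h2
      · exact absurd h2 hsnd
      · exact h2
    obtain ⟨hfst, w', hsup, hedg⟩ := ih (fun e he => hc e (by simp [he]))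
    obtain ⟨hH2, hf⟩ := hadj
    rw [← hf] at hsup hedg hfst
    refine ⟨hfst, Walk.cons hH2 w', ?_, ?_⟩
    · simp [Walk.support_cons, hsup]
    · have hr : (p.1, r.2) = r := by rw [hf]
      simp [Walk.edges_cons, Sym2.map_pair_eq, hedg, hr]

/-- A walk in the box product all of whose edges are local lifts to a walk in `G`. -/
lemma lift_local : ∀ {p q : α × β} (w : (G □ H).Walk p q),
    (∀ e ∈ w.edges, ∃ s, boxColoring cG cH e = Sum.inl s) →
    p.2 = q.2 ∧ ∃ w' : G.Walk p.1 q.1,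
      w.support = w'.support.map (fun u => (u, p.2)) ∧
      w.edges = w'.edges.map (Sym2.map (fun u => (u, p.2))) := by
  intro p q w
  induction w with
  | nil => exact fun _ => ⟨rfl, Walk.nil, by simp, by simp⟩
  | @cons p r q h rest ih =>
    intro hc
    obtain ⟨t, ht⟩ := hc s(p, r) (by simp)
    rw [boxColoring_mk] at ht
    have hsnd : p.2 = r.2 := by
      by_contra hsnd; rw [if_neg hsnd] at ht; exact Sum.inr_ne_inl ht
    have hadj : G.Adj p.1 r.1 := by
      rcases (boxProd_adj.mp h) with ⟨h1, _⟩ | ⟨h1, _⟩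
      · exact h1
      · exact absurd hsnd (H.ne_of_adj h1)
    obtain ⟨hfst, w', hsup, hedg⟩ := ih (fun e he => hc e (by simp [he]))
    rw [← hsnd] at hsup hedg hfst
    refine ⟨hfst, Walk.cons hadj w', ?_, ?_⟩
    · simp [Walk.support_cons, hsup]
    · have hr : (r.1, p.2) = r := by rw [hsnd]
      simp [Walk.edges_cons, Sym2.map_pair_eq, hedg, hr]

/-- Transfer of the cycle property along projections. -/
lemma isCycle_of_lift {V W : Type*} {G₁ : SimpleGraph V} {G₂ : SimpleGraph W} {f : V → W}
    {v : V} {w : G₂.Walk (f v) (f v)} {w' : G₁.Walk v v}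
    (hs : w.support = w'.support.map f) (he : w.edges = w'.edges.map (Sym2.map f))
    (hw : w.IsCycle) : w'.IsCycle := by
  refine ⟨⟨⟨?_⟩, ?_⟩, ?_⟩
  · have := hw.isTrail.edges_nodup
    rw [he] at this
    exact this.of_map _
  · intro hnil
    have h0 : w.edges = [] := by simp [he, hnil]
    have := hw.ne_nil
    have hlen : w.length = 0 := by
      rw [← Walk.length_edges, h0]; rfl
    exact this (Walk.nil_iff_eq_nil.mp (Walk.length_eq_zero_iff.mp hlen))
  · have := hw.support_nodup
    rw [hs, ← List.map_tail] at this
    exact this.of_map _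

end Aux

/-- the combined colouring of G □ H is proper, and every bichromatic cycle
uses both a colour of G and a colour of H. -/
theorem boxColoring_proper_and_bichromatic_cycles_mixed {α β S T : Type*} [DecidableEq β]
    (G : SimpleGraph α) (H : SimpleGraph β)
    (cG : Sym2 α → S) (cH : Sym2 β → T)
    (hG : IsAcyclicEdgeColoring G cG) (hH : IsAcyclicEdgeColoring H cH) :
    IsProperEdgeColoring (G □ H) (boxColoring cG cH) ∧
    ∀ (v : α × β) (w : (G □ H).Walk v v), w.IsCycle →
      (∃ x y : S ⊕ T, ∀ e ∈ w.edges, boxColoring cG cH e = x ∨ boxColoring cG cH e = y) →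
      (∃ e ∈ w.edges, ∃ s : S, boxColoring cG cH e = Sum.inl s) ∧
      (∃ e ∈ w.edges, ∃ t : T, boxColoring cG cH e = Sum.inr t) := by
  constructor
  · -- properness
    intro e₁ he₁ e₂ he₂ hne hx
    revert he₁ he₂ hne hx
    induction e₁ using Sym2.ind with
    | _ p q =>
    induction e₂ using Sym2.ind with
    | _ p' q' =>
    intro he₁ he₂ hne hx
    obtain ⟨x, hx1, hx2⟩ := hx
    rw [Sym2.mem_iff] at hx1 hx2
    rw [mem_edgeSet, boxProd_adj] at he₁ he₂
    rw [boxColoring_mk, boxColoring_mk]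
    rcases he₁ with ⟨hg1, hs1⟩ | ⟨hh1, hf1⟩ <;> rcases he₂ with ⟨hg2, hs2⟩ | ⟨hh2, hf2⟩
    · -- both local
      rw [if_pos hs1, if_pos hs2]
      have hpb : p.2 = x.2 := by
        rcases hx1 with h | h
        · rw [h]
        · rw [h]; exact hs1
      have hp'b : p'.2 = x.2 := by
        rcases hx2 with h | h
        · rw [h]
        · rw [h]; exact hs2
      have e1eq : s(p, q) = Sym2.map (fun u => (u, x.2)) s(p.1, q.1) := by
        have hp : p = (p.1, x.2) := Prod.ext rfl hpb
        have hq : q = (q.1, x.2) := Prod.ext rfl (hs1.symm.trans hpb)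
        rw [Sym2.map_pair_eq, ← hp, ← hq]
      have e2eq : s(p', q') = Sym2.map (fun u => (u, x.2)) s(p'.1, q'.1) := by
        have hp : p' = (p'.1, x.2) := Prod.ext rfl hp'b
        have hq : q' = (q'.1, x.2) := Prod.ext rfl (hs2.symm.trans hp'b)
        rw [Sym2.map_pair_eq, ← hp, ← hq]
      intro heq
      refine hG.1 s(p.1, q.1) (G.mem_edgeSet.mpr hg1) s(p'.1, q'.1) (G.mem_edgeSet.mpr hg2)
        ?_ ?_ (Sum.inl.inj heq)
      · intro h; exact hne (by rw [e1eq, e2eq, h])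
      · refine ⟨x.1, ?_, ?_⟩ <;> rw [Sym2.mem_iff]
        · rcases hx1 with h | h
          · left; rw [h]
          · right; rw [h]
        · rcases hx2 with h | h
          · left; rw [h]
          · right; rw [h]
    · rw [if_pos hs1, if_neg (H.ne_of_adj hh2)]; simp
    · rw [if_neg (H.ne_of_adj hh1), if_pos hs2]; simp
    · -- both crossing
      rw [if_neg (H.ne_of_adj hh1), if_neg (H.ne_of_adj hh2)]
      have hpb : p.1 = x.1 := by
        rcases hx1 with h | h
        · rw [h]
        · rw [h]; exact hf1
      have hp'b : p'.1 = x.1 := by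
        rcases hx2 with h | h
        · rw [h]
        · rw [h]; exact hf2
      have e1eq : s(p, q) = Sym2.map (fun h => (x.1, h)) s(p.2, q.2) := by
        have hp : p = (x.1, p.2) := Prod.ext hpb rfl
        have hq : q = (x.1, q.2) := Prod.ext (hf1.symm.trans hpb) rfl
        rw [Sym2.map_pair_eq, ← hp, ← hq]
      have e2eq : s(p', q') = Sym2.map (fun h => (x.1, h)) s(p'.2, q'.2) := by
        have hp : p' = (x.1, p'.2) := Prod.ext hp'b rfl
        have hq : q' = (x.1, q'.2) := Prod.ext (hf2.symm.trans hp'b) rfl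
        rw [Sym2.map_pair_eq, ← hp, ← hq]
      intro heq
      refine hH.1 s(p.2, q.2) (H.mem_edgeSet.mpr hh1) s(p'.2, q'.2) (H.mem_edgeSet.mpr hh2)
        ?_ ?_ (Sum.inr.inj heq)
      · intro h; exact hne (by rw [e1eq, e2eq, h])
      · refine ⟨x.2, ?_, ?_⟩ <;> rw [Sym2.mem_iff]
        · rcases hx1 with h | h
          · left; rw [h]
          · right; rw [h]
        · rcases hx2 with h | h
          · left; rw [h]
          · right; rw [h]
  · -- bichromatic cycles are mixed
    rintro v w hcyc ⟨xx, yy, hxy⟩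
    constructor
    · by_contra hA
      push_neg at hA
      have hall : ∀ e ∈ w.edges, ∃ t, boxColoring cG cH e = Sum.inr t := by
        intro e he
        cases hc : boxColoring cG cH e with
        | inl s => exact absurd hc (hA e he s)
        | inr t => exact ⟨t, rfl⟩
      obtain ⟨-, w', hsup, hedg⟩ := lift_cross w hall
      have hcyc' : w'.IsCycle :=
        isCycle_of_lift (f := fun h : β => (v.1, h)) (v := v.2) hsup hedg hcyc
      obtain ⟨e₁, h1, e₂, h2, e₃, h3, h12, h13, h23⟩ := hH.2 v.2 w' hcyc'
      have key : ∀ e ∈ w'.edges, Sum.inr (cH e) = xx ∨ Sum.inr (cH e) = yy := by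
        intro e he
        have hm : Sym2.map (fun h => (v.1, h)) e ∈ w.edges := by
          rw [hedg]; exact List.mem_map_of_mem he
        have := hxy _ hm
        rwa [boxColoring_map_right v.1 (w'.edges_subset_edgeSet he)] at this
      rcases key e₁ h1 with h | h <;> rcases key e₂ h2 with h' | h' <;>
        rcases key e₃ h3 with h'' | h'' <;>
        first
        | exact h12 (Sum.inr.inj (h.trans h'.symm))
        | exact h13 (Sum.inr.inj (h.trans h''.symm))
        | exact h23 (Sum.inr.inj (h'.trans h''.symm))
    · by_contra hA
      push_neg at hA
      have hall : ∀ e ∈ w.edges, ∃ s, boxColoring cG cH e = Sum.inl s := by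
        intro e he
        cases hc : boxColoring cG cH e with
        | inl s => exact ⟨s, rfl⟩
        | inr t => exact absurd hc (hA e he t)
      obtain ⟨-, w', hsup, hedg⟩ := lift_local w hall
      have hcyc' : w'.IsCycle :=
        isCycle_of_lift (f := fun u : α => (u, v.2)) (v := v.1) hsup hedg hcyc
      obtain ⟨e₁, h1, e₂, h2, e₃, h3, h12, h13, h23⟩ := hG.2 v.1 w' hcyc'
      have key : ∀ e ∈ w'.edges, Sum.inl (cG e) = xx ∨ Sum.inl (cG e) = yy := by
        intro e he
        have hm : Sym2.map (fun u => (u, v.2)) e ∈ w.edges := by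
          rw [hedg]; exact List.mem_map_of_mem he
        have := hxy _ hm
        rwa [boxColoring_map_left v.2 e] at this
      rcases key e₁ h1 with h | h <;> rcases key e₂ h2 with h' | h' <;>
        rcases key e₃ h3 with h'' | h'' <;>
        first
        | exact h12 (Sum.inl.inj (h.trans h'.symm))
        | exact h13 (Sum.inl.inj (h.trans h''.symm))
        | exact h23 (Sum.inl.inj (h'.trans h''.symm))
end

section
/- Let G be a simple graph with a'(G) = η ≥ 2. Then a'(G □ P_2) ≤ η + 1, where P_2 is the path on two vertices (a single edge). -/
open SimpleGraph

section AECproof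

open SimpleGraph Walk
open scoped Classical

variable {α : Type*} {G : SimpleGraph α}

lemma AEC_adjP {x y : α × Fin 2} :
    (G □ pathGraph 2).Adj x y ↔ (G.Adj x.1 y.1 ∧ x.2 = y.2) ∨ (x.1 = y.1 ∧ x.2 ≠ y.2) := by
  rw [boxProd_adj, pathGraph_two_eq_top]
  simp only [top_adj]
  tauto

noncomputable def AEC_projW : ∀ {x y : α × Fin 2}, (G □ pathGraph 2).Walk x y → G.Walk x.1 y.1
  | _, _, Walk.nil => Walk.nil
  | x, _, @Walk.cons _ _ _ z _ h p =>
    if he : x.1 = z.1 then (AEC_projW p).copy he.symm rfl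
    else Walk.cons ((AEC_adjP.mp h).resolve_right (fun hr => he hr.1)).1 (AEC_projW p)

lemma AEC_projW_cons_vert {x z y : α × Fin 2} (h : (G □ pathGraph 2).Adj x z)
    (p : (G □ pathGraph 2).Walk z y) (he : x.1 = z.1) :
    AEC_projW (Walk.cons h p) = (AEC_projW p).copy he.symm rfl := by
  simp only [AEC_projW]
  rw [dif_pos he]

lemma AEC_projW_cons_horiz {x z y : α × Fin 2} (h : (G □ pathGraph 2).Adj x z)
    (p : (G □ pathGraph 2).Walk z y) (he : ¬ x.1 = z.1) :
    AEC_projW (Walk.cons h p) =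
      Walk.cons ((AEC_adjP.mp h).resolve_right (fun hr => he hr.1)).1 (AEC_projW p) := by
  simp only [AEC_projW]
  rw [dif_neg he]

lemma AEC_projW_support_subset {x y : α × Fin 2} (p : (G □ pathGraph 2).Walk x y) :
    ∀ a ∈ (AEC_projW p).support, ∃ u ∈ p.support, u.1 = a := by
  induction p with
  | nil =>
    intro a ha
    simp only [AEC_projW, Walk.support_nil, List.mem_singleton] at ha
    exact ⟨_, by simp, ha.symm⟩
  | @cons u z y h p ih =>
    intro a ha
    by_cases he : u.1 = z.1
    · rw [AEC_projW_cons_vert h p he, Walk.support_copy] at ha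
      obtain ⟨w, hw, hw2⟩ := ih a ha
      exact ⟨w, by simp [hw], hw2⟩
    · rw [AEC_projW_cons_horiz h p he, Walk.support_cons] at ha
      rcases List.mem_cons.mp ha with ha | ha
      · exact ⟨u, by simp, ha.symm⟩
      · obtain ⟨w, hw, hw2⟩ := ih a ha
        exact ⟨w, by simp [hw], hw2⟩


lemma AEC_projW_edges_pullback {x y : α × Fin 2} (p : (G □ pathGraph 2).Walk x y) :
    ∀ e ∈ (AEC_projW p).edges, ∃ a b j, s(((a, j) : α × Fin 2), (b, j)) ∈ p.edges ∧ e = s(a, b) := by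
  induction p with
  | nil => intro e he; simp [AEC_projW] at he
  | @cons u z y h p ih =>
    intro e he
    by_cases hv : u.1 = z.1
    · rw [AEC_projW_cons_vert h p hv, Walk.edges_copy] at he
      obtain ⟨a, b, j, hm, rfl⟩ := ih e he
      exact ⟨a, b, j, by simp [hm], rfl⟩
    · rw [AEC_projW_cons_horiz h p hv, Walk.edges_cons] at he
      rcases List.mem_cons.mp he with he | he
      · refine ⟨u.1, z.1, u.2, ?_, he⟩
        have hz : z.2 = u.2 := (((AEC_adjP.mp h).resolve_right (fun hr => hv hr.1)).2).symm
        have hz2 : ((z.1, u.2) : α × Fin 2) = z := Prod.ext rfl hz.symm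
        have hs : s(((u.1, u.2) : α × Fin 2), (z.1, u.2)) = s(u, z) := by rw [hz2]
        rw [Walk.edges_cons, hs]
        exact List.mem_cons_self
      · obtain ⟨a, b, j, hm, rfl⟩ := ih e he
        exact ⟨a, b, j, by simp [hm], rfl⟩

lemma AEC_horiz_edge_eq (u z : α × Fin 2) (hz : z.2 = u.2) :
    s(((u.1, u.2) : α × Fin 2), (z.1, u.2)) = s(u, z) := by
  rw [show ((z.1, u.2) : α × Fin 2) = z from Prod.ext rfl hz.symm]

lemma AEC_projW_edges_nodup {x y : α × Fin 2} (p : (G □ pathGraph 2).Walk x y)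
    (hn : p.edges.Nodup)
    (hinj : ∀ a b (i j : Fin 2), s(((a, i) : α × Fin 2), (b, i)) ∈ p.edges →
      s(((a, j) : α × Fin 2), (b, j)) ∈ p.edges → i = j) :
    (AEC_projW p).edges.Nodup := by
  induction p with
  | nil => simp [AEC_projW]
  | @cons u z y h p ih =>
    rw [Walk.edges_cons, List.nodup_cons] at hn
    have hinj' : ∀ a b (i j : Fin 2), s(((a, i) : α × Fin 2), (b, i)) ∈ p.edges →
        s(((a, j) : α × Fin 2), (b, j)) ∈ p.edges → i = j := by
      intro a b i j h1 h2
      exact hinj a b i j (by simp [h1]) (by simp [h2])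
    by_cases hv : u.1 = z.1
    · rw [AEC_projW_cons_vert h p hv, Walk.edges_copy]
      exact ih hn.2 hinj'
    · rw [AEC_projW_cons_horiz h p hv, Walk.edges_cons, List.nodup_cons]
      refine ⟨?_, ih hn.2 hinj'⟩
      intro hmem
      obtain ⟨a, b, j, hm, heq⟩ := AEC_projW_edges_pullback p _ hmem
      have hz : z.2 = u.2 := (((AEC_adjP.mp h).resolve_right (fun hr => hv hr.1)).2).symm
      have hm' : s(((u.1, j) : α × Fin 2), (z.1, j)) ∈ p.edges := by
        rcases Sym2.eq_iff.mp heq with ⟨rfl, rfl⟩ | ⟨rfl, rfl⟩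
        · exact hm
        · rwa [Sym2.eq_swap]
      have hju : u.2 = j := by
        refine hinj u.1 z.1 u.2 j ?_ (by simp [hm'])
        rw [AEC_horiz_edge_eq u z hz, Walk.edges_cons]
        exact List.mem_cons_self
      apply hn.1
      rw [← AEC_horiz_edge_eq u z hz, hju]
      exact hm'

lemma AEC_projW_support_nodup {x y : α × Fin 2} (p : (G □ pathGraph 2).Walk x y)
    (hp : p.IsPath)
    (hpair : ∀ a : α, ((a, 0) : α × Fin 2) ∈ p.support → ((a, 1) : α × Fin 2) ∈ p.support →
      s(((a, 0) : α × Fin 2), (a, 1)) ∈ p.edges) :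
    (AEC_projW p).support.Nodup := by
  induction p with
  | nil => simp [AEC_projW]
  | @cons u z y h p ih =>
    rw [Walk.cons_isPath_iff] at hp
    have hpair' : ∀ a : α, ((a, 0) : α × Fin 2) ∈ p.support → ((a, 1) : α × Fin 2) ∈ p.support →
        s(((a, 0) : α × Fin 2), (a, 1)) ∈ p.edges := by
      intro a h0 h1
      have := hpair a (by simp [h0]) (by simp [h1])
      rw [Walk.edges_cons] at this
      rcases List.mem_cons.mp this with heq | hmem
      · exfalso
        rcases Sym2.eq_iff.mp heq.symm with ⟨h0', h1'⟩ | ⟨h0', h1'⟩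
        · exact hp.2 (h0' ▸ h0)
        · exact hp.2 (h0' ▸ h1)
      · exact hmem
    by_cases hv : u.1 = z.1
    · rw [AEC_projW_cons_vert h p hv, Walk.support_copy]
      exact ih hp.1 hpair'
    · rw [AEC_projW_cons_horiz h p hv, Walk.support_cons, List.nodup_cons]
      refine ⟨?_, ih hp.1 hpair'⟩
      intro hmem
      obtain ⟨w, hw, hw1⟩ := AEC_projW_support_subset p _ hmem
      have hwu : w ≠ u := fun hwu => hp.2 (hwu ▸ hw)
      -- w.1 = u.1 and w ≠ u, so w = (u.1, other)
      have hw2 : w.2 ≠ u.2 := by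
        intro h22
        exact hwu (Prod.ext hw1 h22)
      -- both (u.1,0) and (u.1,1) in support of cons
      have h0 : ((u.1, u.2) : α × Fin 2) ∈ (Walk.cons h p).support := by
        simp [show ((u.1, u.2) : α × Fin 2) = u from rfl]
      have h1 : ((u.1, w.2) : α × Fin 2) ∈ (Walk.cons h p).support := by
        rw [Walk.support_cons]
        exact List.mem_cons_of_mem _ (by rw [show ((u.1, w.2) : α × Fin 2) = w from Prod.ext hw1.symm rfl]; exact hw)
      have fin2 : ∀ i j : Fin 2, j ≠ i → (i = 0 ∧ j = 1) ∨ (i = 1 ∧ j = 0) := by decide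
      have hcases := fin2 u.2 w.2 hw2
      have hvert : s(((u.1, 0) : α × Fin 2), (u.1, 1)) ∈ (Walk.cons h p).edges := by
        rcases hcases with ⟨hu2, hw2'⟩ | ⟨hu2, hw2'⟩
        · exact hpair u.1 (hu2 ▸ h0) (hw2' ▸ h1)
        · exact hpair u.1 (hw2' ▸ h1) (hu2 ▸ h0)
      rw [Walk.edges_cons] at hvert
      rcases List.mem_cons.mp hvert with heq | hmem'
      · rcases Sym2.eq_iff.mp heq with ⟨_, h1'⟩ | ⟨h0', _⟩
        · exact hv (by rw [← h1'])
        · exact hv (by rw [← h0'])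
      · apply hp.2
        rcases hcases with ⟨hu2, _⟩ | ⟨hu2, _⟩
        · have := Walk.fst_mem_support_of_mem_edges p hmem'
          rwa [show ((u.1, 0) : α × Fin 2) = u from Prod.ext rfl hu2.symm] at this
        · have := Walk.snd_mem_support_of_mem_edges p hmem'
          rwa [show ((u.1, 1) : α × Fin 2) = u from Prod.ext rfl hu2.symm] at this

lemma AEC_fin2 : ∀ i j : Fin 2, i ≠ j → (i = 0 ∧ j = 1) ∨ (i = 1 ∧ j = 0) := by decide

lemma AEC_fin2' : ∀ i j k : Fin 2, j ≠ i → k ≠ i → j = k := by decide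

lemma AEC_walk_decomp {V : Type*} {H : SimpleGraph V} {a b : V} (p : H.Walk a b)
    (hp : ¬ p.Nil) : ∃ (z : V) (h' : H.Adj a z) (q : H.Walk z b), p = Walk.cons h' q := by
  cases p with
  | nil => exact absurd Walk.Nil.nil hp
  | cons h q => exact ⟨_, h, q, rfl⟩

lemma AEC_first_edge {V : Type*} {H : SimpleGraph V} {a b : V} (p : H.Walk a b)
    (hp : 0 < p.length) : ∃ z, s(a, z) ∈ p.edges := by
  cases p with
  | nil => simp at hp
  | cons h q => exact ⟨_, by rw [Walk.edges_cons]; exact List.mem_cons_self⟩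

lemma AEC_cycle_start_edges {V : Type*} {H : SimpleGraph V} {u : V} (w : H.Walk u u)
    (hc : w.IsCycle) :
    ∃ e₁ ∈ w.edges, ∃ e₂ ∈ w.edges, e₁ ≠ e₂ ∧ u ∈ e₁ ∧ u ∈ e₂ := by
  obtain ⟨z, h, q, rfl⟩ := AEC_walk_decomp w hc.not_nil
  obtain ⟨hq, hne⟩ := (Walk.cons_isCycle_iff q h).mp hc
  have hql : 0 < q.length := by
    have h3 := hc.three_le_length
    rw [Walk.length_cons] at h3
    omega
  obtain ⟨z₂, hz₂⟩ := AEC_first_edge q.reverse (by rwa [Walk.length_reverse])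
  have e₂q : s(u, z₂) ∈ q.edges := by rwa [Walk.edges_reverse, List.mem_reverse] at hz₂
  refine ⟨s(u, z), by simp, s(u, z₂), by simp [e₂q], fun he => hne (he ▸ e₂q), by simp, by simp⟩

lemma AEC_two_incident {V : Type*} {H : SimpleGraph V} {v u : V} (w : H.Walk v v)
    (hc : w.IsCycle) (hu : u ∈ w.support) :
    ∃ e₁ ∈ w.edges, ∃ e₂ ∈ w.edges, e₁ ≠ e₂ ∧ u ∈ e₁ ∧ u ∈ e₂ := by
  obtain ⟨e₁, m₁, e₂, m₂, hne, h1, h2⟩ := AEC_cycle_start_edges (w.rotate u hu) (hc.rotate hu)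
  have hperm := (w.rotate_edges u hu).perm.mem_iff (a := e₁)
  have hperm2 := (w.rotate_edges u hu).perm.mem_iff (a := e₂)
  exact ⟨e₁, hperm.mp m₁, e₂, hperm2.mp m₂, hne, h1, h2⟩

lemma AEC_rotate_one {V : Type*} {H : SimpleGraph V} {v z : V} (h : H.Adj v z)
    (q : H.Walk z v) (hc : (Walk.cons h q).IsCycle) : (q.concat h).IsCycle := by
  obtain ⟨hq, hne⟩ := (Walk.cons_isCycle_iff q h).mp hc
  have hsupn : q.support.Nodup := hq.support_nodup
  rw [Walk.support_eq_cons, List.nodup_cons] at hsupn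
  rw [Walk.isCycle_def]
  refine ⟨?_, ?_, ?_⟩
  · rw [Walk.isTrail_def, Walk.edges_concat, List.concat_eq_append]
    rw [List.nodup_append]
    exact ⟨hq.isTrail.edges_nodup, List.nodup_singleton _, by
      intro e he b hb heq
      rw [List.mem_singleton] at hb
      rw [heq, hb] at he
      exact hne he⟩
  · intro hnil
    have := congrArg Walk.length hnil
    rw [Walk.length_concat] at this
    simp at this
  · rw [Walk.support_concat, Walk.support_eq_cons, List.cons_append,
      List.tail_cons, List.nodup_append]
    exact ⟨hsupn.2, List.nodup_singleton _, by
      intro a ha b hb hab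
      rw [List.mem_singleton] at hb
      rw [hab, hb] at ha
      exact hsupn.1 ha⟩

lemma AEC_support_const {x y : α × Fin 2} (p : (G □ pathGraph 2).Walk x y)
    (hnov : ∀ (a : α) (i j : Fin 2), s(((a, i) : α × Fin 2), (a, j)) ∈ p.edges → i = j) :
    ∀ u ∈ p.support, u.2 = x.2 := by
  induction p with
  | nil => intro u hu; rw [Walk.support_nil, List.mem_singleton] at hu; rw [hu]
  | @cons u z y h p ih =>
    intro w hw
    have hz2 : z.2 = u.2 := by
      rcases AEC_adjP.mp h with ⟨_, h2⟩ | ⟨h1, h2⟩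
      · exact h2.symm
      · exfalso
        apply h2
        apply hnov u.1 u.2 z.2
        rw [show ((u.1, z.2) : α × Fin 2) = z from Prod.ext h1 rfl]
        simp [show ((u.1, u.2) : α × Fin 2) = u from rfl]
    rw [Walk.support_cons] at hw
    rcases List.mem_cons.mp hw with rfl | hw'
    · rfl
    · have := ih (fun a i j hm => hnov a i j (by simp [hm])) w hw'
      rw [this, hz2]

lemma AEC_edge_class {e : Sym2 (α × Fin 2)} (he : e ∈ (G □ pathGraph 2).edgeSet) :
    (∃ (a b : α) (j : Fin 2), G.Adj a b ∧ e = s(((a, j) : α × Fin 2), (b, j))) ∨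
      (∃ a, e = s(((a, 0) : α × Fin 2), (a, 1))) := by
  induction e using Sym2.ind with
  | _ x y =>
    rw [SimpleGraph.mem_edgeSet] at he
    rcases AEC_adjP.mp he with ⟨h1, h2⟩ | ⟨h1, h2⟩
    · exact Or.inl ⟨x.1, y.1, x.2, h1, (AEC_horiz_edge_eq x y h2.symm).symm⟩
    · right
      refine ⟨x.1, ?_⟩
      rcases AEC_fin2 x.2 y.2 h2 with ⟨hx, hy⟩ | ⟨hx, hy⟩
      · rw [show ((x.1, 0) : α × Fin 2) = x from Prod.ext rfl hx.symm,
          show ((x.1, 1) : α × Fin 2) = y from Prod.ext h1 hy.symm]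
      · rw [show ((x.1, 0) : α × Fin 2) = y from Prod.ext h1 hy.symm,
          show ((x.1, 1) : α × Fin 2) = x from Prod.ext rfl hx.symm]
        exact Sym2.eq_swap

lemma AEC_edge_at {e : Sym2 (α × Fin 2)} (he : e ∈ (G □ pathGraph 2).edgeSet)
    (a : α) (i : Fin 2) (hi : ((a, i) : α × Fin 2) ∈ e) :
    (∃ b, G.Adj a b ∧ e = s(((a, i) : α × Fin 2), (b, i))) ∨
      e = s(((a, 0) : α × Fin 2), (a, 1)) := by
  rcases AEC_edge_class he with ⟨a', b', j, hab, rfl⟩ | ⟨b, rfl⟩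
  · left
    rcases Sym2.mem_iff.mp hi with h' | h'
    · rw [Prod.mk.injEq] at h'
      obtain ⟨ha, hj⟩ := h'
      exact ⟨b', by rw [ha]; exact hab, by rw [ha, hj]⟩
    · rw [Prod.mk.injEq] at h'
      obtain ⟨ha, hj⟩ := h'
      refine ⟨a', by rw [ha]; exact hab.symm, ?_⟩
      rw [ha, hj]
      exact Sym2.eq_swap
  · right
    have hab : a = b := by
      rcases Sym2.mem_iff.mp hi with h' | h' <;>
        · rw [Prod.mk.injEq] at h'
          exact h'.1
    rw [hab]

noncomputable def AEC_col {n : ℕ} (c : Sym2 α → Fin n) (τ : Fin 2 → Fin n → Fin n) :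
    Sym2 (α × Fin 2) → Fin (n + 1) :=
  Sym2.lift ⟨fun x y => if x.2 = y.2 then (τ x.2 (c s(x.1, y.1))).castSucc else Fin.last n, by
    intro x y
    dsimp only
    by_cases hxy : x.2 = y.2
    · rw [if_pos hxy, if_pos hxy.symm, hxy, Sym2.eq_swap]
    · rw [if_neg hxy, if_neg (Ne.symm hxy)]⟩

lemma AEC_col_horiz {n : ℕ} (c : Sym2 α → Fin n) (τ : Fin 2 → Fin n → Fin n)
    (a b : α) (j : Fin 2) :
    AEC_col c τ s(((a, j) : α × Fin 2), (b, j)) = (τ j (c s(a, b))).castSucc := by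
  simp [AEC_col]

lemma AEC_col_vert {n : ℕ} (c : Sym2 α → Fin n) (τ : Fin 2 → Fin n → Fin n)
    (u z : α × Fin 2) (h : u.2 ≠ z.2) :
    AEC_col c τ s(u, z) = Fin.last n := by
  simp [AEC_col, h]

lemma AEC_projW_isCycle {v z : α × Fin 2} (h : (G □ pathGraph 2).Adj v z)
    (q : (G □ pathGraph 2).Walk z v) (hc : (Walk.cons h q).IsCycle) (hh : ¬ v.1 = z.1)
    (hpair : ∀ a : α, ((a, 0) : α × Fin 2) ∈ (Walk.cons h q).support →
      ((a, 1) : α × Fin 2) ∈ (Walk.cons h q).support →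
      s(((a, 0) : α × Fin 2), (a, 1)) ∈ (Walk.cons h q).edges)
    (hinj : ∀ (a b : α) (i j : Fin 2), s(((a, i) : α × Fin 2), (b, i)) ∈ (Walk.cons h q).edges →
      s(((a, j) : α × Fin 2), (b, j)) ∈ (Walk.cons h q).edges → i = j) :
    (AEC_projW (Walk.cons h q)).IsCycle := by
  obtain ⟨hq, hne⟩ := (Walk.cons_isCycle_iff q h).mp hc
  have hz2 : z.2 = v.2 := (((AEC_adjP.mp h).resolve_right (fun hr => hh hr.1)).2).symm
  rw [AEC_projW_cons_horiz h q hh, Walk.cons_isCycle_iff]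
  constructor
  · apply Walk.IsPath.mk'
    apply AEC_projW_support_nodup q hq
    intro a h0 h1
    have hm := hpair a (by simp [h0]) (by simp [h1])
    rw [Walk.edges_cons] at hm
    rcases List.mem_cons.mp hm with heq | hm
    · exfalso
      rcases Sym2.eq_iff.mp heq with ⟨h0', h1'⟩ | ⟨h0', h1'⟩
      · exact hh (((Prod.mk.injEq _ _ _ _).mp h0').1.symm.trans ((Prod.mk.injEq _ _ _ _).mp h1').1.symm.symm)
      · exact hh (((Prod.mk.injEq _ _ _ _).mp h1').1.symm.trans ((Prod.mk.injEq _ _ _ _).mp h0').1.symm.symm)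
    · exact hm
  · intro hmem
    obtain ⟨a, b, j, hm, heq⟩ := AEC_projW_edges_pullback q _ hmem
    have hm' : s(((v.1, j) : α × Fin 2), (z.1, j)) ∈ q.edges := by
      rcases Sym2.eq_iff.mp heq with ⟨rfl, rfl⟩ | ⟨rfl, rfl⟩
      · exact hm
      · rwa [Sym2.eq_swap]
    have hj : v.2 = j := by
      refine hinj v.1 z.1 v.2 j ?_ (by simp [hm'])
      rw [AEC_horiz_edge_eq v z hz2, Walk.edges_cons]
      exact List.mem_cons_self
    apply hne
    rw [← AEC_horiz_edge_eq v z hz2, hj]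
    exact hm'

end AECproof

/-- if a'(G) = η ≥ 2 then a'(G □ P₂) ≤ η + 1. -/
theorem acyclicChromaticIndex_boxProd_pathGraph_two {α : Type*}
    (G : SimpleGraph α) (η : ℕ) (hη : acyclicChromaticIndex G = η) (h2 : 2 ≤ η) :
    acyclicChromaticIndex (G □ pathGraph 2) ≤ η + 1 := by
  classical
  -- extract an optimal acyclic edge colouring of G
  have hne2 : {n | ∃ c : Sym2 α → Fin n, IsAcyclicEdgeColoring G c}.Nonempty := by
    by_contra hcon
    rw [Set.not_nonempty_iff_eq_empty] at hcon
    have h0 : acyclicChromaticIndex G = 0 := by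
      rw [acyclicChromaticIndex, hcon, Nat.sInf_empty]
    omega
  have hmemη : η ∈ {n | ∃ c : Sym2 α → Fin n, IsAcyclicEdgeColoring G c} := by
    rw [← hη]; exact Nat.sInf_mem hne2
  obtain ⟨c, hcP, hcA⟩ := hmemη
  haveI : NeZero η := ⟨by omega⟩
  -- a fixed-point-free permutation of the colours
  obtain ⟨σf, hσinj, hσne⟩ :
      ∃ σf : Fin η → Fin η, Function.Injective σf ∧ ∀ i, σf i ≠ i := by
    refine ⟨fun i => i + 1, fun a b hab => by simpa using hab, ?_⟩
    intro i hi
    have hi' : i + 1 = i := hi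
    have h1 : (1 : Fin η) = 0 := by
      calc (1 : Fin η) = i + 1 - i := by rw [add_sub_cancel_left]
        _ = i - i := by rw [hi']
        _ = 0 := by rw [sub_self]
    have h1' := congrArg Fin.val h1
    rw [Fin.val_one'] at h1'
    simp at h1'
    omega
  obtain ⟨τf, hτ0, hτ1⟩ : ∃ τf : Fin 2 → Fin η → Fin η, τf 0 = id ∧ τf 1 = σf :=
    ⟨fun j => if j = 0 then id else σf, by simp, by simp⟩
  have hjc : ∀ j : Fin 2, j = 0 ∨ j = 1 := by decide
  have hτinj : ∀ j, Function.Injective (τf j) := by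
    intro j
    rcases hjc j with rfl | rfl
    · rw [hτ0]; exact fun a b hab => hab
    · rw [hτ1]; exact hσinj
  set CC := AEC_col c τf with hCC
  -- properness
  have hprop : IsProperEdgeColoring (G □ pathGraph 2) CC := by
    intro e₁ he₁ e₂ he₂ hnee hsh
    obtain ⟨xx, hx1, hx2⟩ := hsh
    obtain ⟨y, rfl⟩ := Sym2.mem_iff_exists.mp hx1
    obtain ⟨z, rfl⟩ := Sym2.mem_iff_exists.mp hx2
    have h1 := (SimpleGraph.mem_edgeSet _).mp he₁
    have h2 := (SimpleGraph.mem_edgeSet _).mp he₂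
    rcases AEC_adjP.mp h1 with ⟨ha1, hb1⟩ | ⟨ha1, hb1⟩ <;>
      rcases AEC_adjP.mp h2 with ⟨ha2, hb2⟩ | ⟨ha2, hb2⟩
    · -- both horizontal
      have hyz : y.1 ≠ z.1 := by
        intro hyz1
        exact hnee (by rw [show y = z from Prod.ext hyz1 (hb1.symm.trans hb2)])
      have hsne : s(xx.1, y.1) ≠ s(xx.1, z.1) := by
        intro hs
        rcases Sym2.eq_iff.mp hs with ⟨_, h'⟩ | ⟨h', h''⟩
        · exact hyz h'
        · exact hyz (h''.trans h')
      rw [← AEC_horiz_edge_eq xx y hb1.symm, ← AEC_horiz_edge_eq xx z hb2.symm, hCC,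
        AEC_col_horiz, AEC_col_horiz]
      intro heq
      exact hcP s(xx.1, y.1) ((SimpleGraph.mem_edgeSet _).mpr ha1) s(xx.1, z.1)
        ((SimpleGraph.mem_edgeSet _).mpr ha2) hsne ⟨xx.1, by simp, by simp⟩
        (hτinj xx.2 (Fin.castSucc_injective _ heq))
    · rw [← AEC_horiz_edge_eq xx y hb1.symm, hCC, AEC_col_horiz, AEC_col_vert c τf xx z hb2]
      exact (Fin.castSucc_lt_last _).ne
    · rw [← AEC_horiz_edge_eq xx z hb2.symm, hCC, AEC_col_vert c τf xx y hb1, AEC_col_horiz]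
      exact (Fin.castSucc_lt_last _).ne.symm
    · exact absurd (by
        rw [show y = z from Prod.ext (ha1.symm.trans ha2)
          (AEC_fin2' xx.2 y.2 z.2 (Ne.symm hb1) (Ne.symm hb2))]) hnee
  -- acyclicity
  have hacyc : ∀ (v : α × Fin 2) (w : (G □ pathGraph 2).Walk v v), w.IsCycle →
      ∃ e₁ ∈ w.edges, ∃ e₂ ∈ w.edges, ∃ e₃ ∈ w.edges,
        CC e₁ ≠ CC e₂ ∧ CC e₁ ≠ CC e₃ ∧ CC e₂ ≠ CC e₃ := by
    intro v w hw
    by_cases hnov : ∀ (a : α) (i j : Fin 2), s(((a, i) : α × Fin 2), (a, j)) ∈ w.edges → i = j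
    · -- Case 1 : no vertical edge in the cycle
      have hsup := AEC_support_const w hnov
      obtain ⟨z, h, q, rfl⟩ := AEC_walk_decomp w hw.not_nil
      have hh : ¬ v.1 = z.1 := by
        intro hvz
        have hz2 : v.2 ≠ z.2 := by
          rcases AEC_adjP.mp h with ⟨hh1, _⟩ | ⟨_, hh2⟩
          · exact absurd hvz hh1.ne
          · exact hh2
        apply hz2
        apply hnov v.1 v.2 z.2
        rw [show ((v.1, z.2) : α × Fin 2) = z from Prod.ext hvz rfl, Walk.edges_cons]
        exact List.mem_cons_self
      have hinj : ∀ (a b : α) (i j : Fin 2),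
          s(((a, i) : α × Fin 2), (b, i)) ∈ (Walk.cons h q).edges →
          s(((a, j) : α × Fin 2), (b, j)) ∈ (Walk.cons h q).edges → i = j := by
        intro a b i j hmi hmj
        have ht1 := hsup (a, i) (Walk.fst_mem_support_of_mem_edges _ hmi)
        have ht2 := hsup (a, j) (Walk.fst_mem_support_of_mem_edges _ hmj)
        exact ht1.trans ht2.symm
      have hpair : ∀ a : α, ((a, 0) : α × Fin 2) ∈ (Walk.cons h q).support →
          ((a, 1) : α × Fin 2) ∈ (Walk.cons h q).support →
          s(((a, 0) : α × Fin 2), (a, 1)) ∈ (Walk.cons h q).edges := by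
        intro a h0 h1
        have h01 := (hsup (a, 0) h0).trans (hsup (a, 1) h1).symm
        exact ((by decide : ¬ ((0 : Fin 2) = 1)) h01).elim
      have hcyc := AEC_projW_isCycle h q hw hh hpair hinj
      obtain ⟨e₁, m₁, e₂, m₂, e₃, m₃, d12, d13, d23⟩ := hcA v.1 _ hcyc
      obtain ⟨a₁, b₁, j₁, f₁, rfl⟩ := AEC_projW_edges_pullback _ e₁ m₁
      obtain ⟨a₂, b₂, j₂, f₂, rfl⟩ := AEC_projW_edges_pullback _ e₂ m₂
      obtain ⟨a₃, b₃, j₃, f₃, rfl⟩ := AEC_projW_edges_pullback _ e₃ m₃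
      have key : ∀ (a b a' b' : α) (j j' : Fin 2),
          s(((a, j) : α × Fin 2), (b, j)) ∈ (Walk.cons h q).edges →
          s(((a', j') : α × Fin 2), (b', j')) ∈ (Walk.cons h q).edges →
          c s(a, b) ≠ c s(a', b') →
          CC s(((a, j) : α × Fin 2), (b, j)) ≠ CC s(((a', j') : α × Fin 2), (b', j')) := by
        intro a b a' b' j j' hma hmb hcab
        have hj : j = v.2 := hsup _ (Walk.fst_mem_support_of_mem_edges _ hma)
        have hj' : j' = v.2 := hsup _ (Walk.fst_mem_support_of_mem_edges _ hmb)
        rw [hCC, AEC_col_horiz, AEC_col_horiz, hj, hj']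
        intro heq
        exact hcab (hτinj v.2 (Fin.castSucc_injective _ heq))
      exact ⟨_, f₁, _, f₂, _, f₃, key _ _ _ _ _ _ f₁ f₂ d12, key _ _ _ _ _ _ f₁ f₃ d13,
        key _ _ _ _ _ _ f₂ f₃ d23⟩
    · -- Case 2 : some vertical edge
      push_neg at hnov
      obtain ⟨a₀, i₀, j₀, hg, hij⟩ := hnov
      have hgl : CC s(((a₀, i₀) : α × Fin 2), (a₀, j₀)) = Fin.last η := by
        rw [hCC]; exact AEC_col_vert c τf _ _ hij
      by_cases htwo : ∀ e ∈ w.edges, ∀ f ∈ w.edges,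
          CC e ≠ Fin.last η → CC f ≠ Fin.last η → CC e = CC f
      · exfalso
        -- find a horizontal edge in the cycle
        have hsup0 : ((a₀, i₀) : α × Fin 2) ∈ w.support :=
          Walk.fst_mem_support_of_mem_edges _ hg
        obtain ⟨E1, mE1, E2, mE2, hE12, hiE1, hiE2⟩ := AEC_two_incident w hw hsup0
        have hexh : ∃ (a b : α) (j : Fin 2), G.Adj a b ∧
            s(((a, j) : α × Fin 2), (b, j)) ∈ w.edges := by
          rcases AEC_edge_at (Walk.edges_subset_edgeSet w mE1) a₀ i₀ hiE1 with
            ⟨b, hab, rfl⟩ | h1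
          · exact ⟨a₀, b, i₀, hab, mE1⟩
          rcases AEC_edge_at (Walk.edges_subset_edgeSet w mE2) a₀ i₀ hiE2 with
            ⟨b, hab, rfl⟩ | h2
          · exact ⟨a₀, b, i₀, hab, mE2⟩
          exact absurd (h1.trans h2.symm) hE12
        obtain ⟨ah, bh, jh, habh, mh⟩ := hexh
        set x := τf jh (c s(ah, bh)) with hx
        have hcolall : ∀ (a b : α) (j : Fin 2),
            s(((a, j) : α × Fin 2), (b, j)) ∈ w.edges → τf j (c s(a, b)) = x := by
          intro a b j hm
          have hCCm : CC s(((a, j) : α × Fin 2), (b, j)) =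
              CC s(((ah, jh) : α × Fin 2), (bh, jh)) := by
            apply htwo _ hm _ mh
            · rw [hCC, AEC_col_horiz]; exact (Fin.castSucc_lt_last _).ne
            · rw [hCC, AEC_col_horiz]; exact (Fin.castSucc_lt_last _).ne
          rw [hCC, AEC_col_horiz, AEC_col_horiz] at hCCm
          exact Fin.castSucc_injective _ hCCm
        have hinjW : ∀ (a b : α) (i j : Fin 2),
            s(((a, i) : α × Fin 2), (b, i)) ∈ w.edges →
            s(((a, j) : α × Fin 2), (b, j)) ∈ w.edges → i = j := by
          intro a b i j hmi hmj
          by_contra hijne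
          have k1 := hcolall a b i hmi
          have k2 := hcolall a b j hmj
          rcases AEC_fin2 i j hijne with ⟨rfl, rfl⟩ | ⟨rfl, rfl⟩
          · rw [hτ0] at k1; rw [hτ1] at k2
            exact hσne _ (k2.trans k1.symm)
          · rw [hτ1] at k1; rw [hτ0] at k2
            exact hσne _ (k1.trans k2.symm)
        suffices key : ∀ (v' z' : α × Fin 2) (h' : (G □ pathGraph 2).Adj v' z')
            (q' : (G □ pathGraph 2).Walk z' v'), (Walk.cons h' q').IsCycle → ¬ v'.1 = z'.1 →
            (∀ e, e ∈ (Walk.cons h' q').edges → e ∈ w.edges) → False by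
          obtain ⟨z, h, q, hdec⟩ := AEC_walk_decomp w hw.not_nil
          have hwc : (Walk.cons h q).IsCycle := hdec ▸ hw
          by_cases hfz : v.1 = z.1
          · -- first edge vertical : rotate by one
            have hv2z : v.2 ≠ z.2 := by
              rcases AEC_adjP.mp h with ⟨hh1, _⟩ | ⟨_, hh2⟩
              · exact absurd hfz hh1.ne
              · exact hh2
            have hq3 : 3 ≤ q.length + 1 := by
              have h3 := hw.three_le_length
              rw [hdec, Walk.length_cons] at h3
              exact h3
            have hqnn : ¬ q.Nil := by
              rw [Walk.nil_iff_length_eq]; omega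
            obtain ⟨z₂, h₂, q₂, hqdec⟩ := AEC_walk_decomp q hqnn
            have hrot : (q.concat h).IsCycle := AEC_rotate_one h q hwc
            rw [hqdec, Walk.concat_cons] at hrot
            have hnotin := ((Walk.cons_isCycle_iff q h).mp hwc).2
            have hh2 : ¬ z.1 = z₂.1 := by
              intro hzz2
              rcases AEC_adjP.mp h₂ with ⟨hh1, _⟩ | ⟨hz1, hz2⟩
              · exact hh1.ne hzz2
              · have hz2v : z₂ = v :=
                  Prod.ext (hz1.symm.trans hfz.symm)
                    (AEC_fin2' z.2 z₂.2 v.2 (Ne.symm hz2) hv2z)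
                apply hnotin
                have : s(z, z₂) ∈ q.edges := by
                  rw [hqdec, Walk.edges_cons]; exact List.mem_cons_self
                rwa [hz2v, Sym2.eq_swap] at this
            apply key z z₂ h₂ (q₂.concat h) hrot hh2
            intro e he
            rw [← Walk.concat_cons, ← hqdec, Walk.edges_concat, List.concat_eq_append] at he
            rcases List.mem_append.mp he with he | he
            · rw [hdec, Walk.edges_cons]; exact List.mem_cons_of_mem _ he
            · rw [List.mem_singleton] at he
              rw [hdec, Walk.edges_cons, he]
              exact List.mem_cons_self
          · apply key v z h q hwc hfz
            intro e he; rw [hdec]; exact he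
        -- proof of key
        intro v' z' h' q' hcyc' hh' hsub
        have hinj' : ∀ (a b : α) (i j : Fin 2),
            s(((a, i) : α × Fin 2), (b, i)) ∈ (Walk.cons h' q').edges →
            s(((a, j) : α × Fin 2), (b, j)) ∈ (Walk.cons h' q').edges → i = j :=
          fun a b i j hm1 hm2 => hinjW a b i j (hsub _ hm1) (hsub _ hm2)
        have hpair' : ∀ a : α, ((a, 0) : α × Fin 2) ∈ (Walk.cons h' q').support →
            ((a, 1) : α × Fin 2) ∈ (Walk.cons h' q').support →
            s(((a, 0) : α × Fin 2), (a, 1)) ∈ (Walk.cons h' q').edges := by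
          intro a h0 _
          obtain ⟨F1, mF1, F2, mF2, hF12, hiF1, hiF2⟩ := AEC_two_incident _ hcyc' h0
          rcases AEC_edge_at (Walk.edges_subset_edgeSet _ mF1) a 0 hiF1 with
            ⟨b1, hab1, rfl⟩ | h1
          · rcases AEC_edge_at (Walk.edges_subset_edgeSet _ mF2) a 0 hiF2 with
              ⟨b2, hab2, rfl⟩ | h2
            · exfalso
              have hc1 := hcolall a b1 0 (hsub _ mF1)
              have hc2 := hcolall a b2 0 (hsub _ mF2)
              apply hprop _ (Walk.edges_subset_edgeSet _ mF1) _
                (Walk.edges_subset_edgeSet _ mF2) hF12 ⟨((a, 0) : α × Fin 2), by simp, by simp⟩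
              rw [hCC, AEC_col_horiz, AEC_col_horiz, hc1, hc2]
            · exact h2 ▸ mF2
          · exact h1 ▸ mF1
        have hcyc2 := AEC_projW_isCycle h' q' hcyc' hh' hpair' hinj'
        obtain ⟨e₁, m₁, e₂, m₂, e₃, m₃, d12, d13, d23⟩ := hcA v'.1 _ hcyc2
        obtain ⟨a₁, b₁, j₁, f₁, rfl⟩ := AEC_projW_edges_pullback _ e₁ m₁
        obtain ⟨a₂, b₂, j₂, f₂, rfl⟩ := AEC_projW_edges_pullback _ e₂ m₂
        obtain ⟨a₃, b₃, j₃, f₃, rfl⟩ := AEC_projW_edges_pullback _ e₃ m₃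
        have k₁ := hcolall a₁ b₁ j₁ (hsub _ f₁)
        have k₂ := hcolall a₂ b₂ j₂ (hsub _ f₂)
        have k₃ := hcolall a₃ b₃ j₃ (hsub _ f₃)
        have dis : ∀ (a b : α) (j : Fin 2), τf j (c s(a, b)) = x →
            c s(a, b) = x ∨ σf (c s(a, b)) = x := by
          intro a b j hj
          rcases hjc j with rfl | rfl
          · left; rw [hτ0] at hj; exact hj
          · right; rw [hτ1] at hj; exact hj
        rcases dis _ _ _ k₁ with h1 | h1 <;> rcases dis _ _ _ k₂ with hB | hB <;>
          rcases dis _ _ _ k₃ with h3 | h3 <;>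
          first
            | exact d12 (h1.trans hB.symm)
            | exact d12 (hσinj (h1.trans hB.symm))
            | exact d13 (h1.trans h3.symm)
            | exact d13 (hσinj (h1.trans h3.symm))
            | exact d23 (hB.trans h3.symm)
            | exact d23 (hσinj (hB.trans h3.symm))
      · push_neg at htwo
        obtain ⟨e, me, f, mf, hel, hfl, hef⟩ := htwo
        exact ⟨e, me, f, mf, _, hg, hef, by rw [hgl]; exact hel, by rw [hgl]; exact hfl⟩
  exact Nat.sInf_le ⟨CC, hprop, hacyc⟩
end
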